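/- arXiv:2105.07670 — 2 statements merged into one kernel-verified Lean document; each statement's English description precedes it below -/
import Mathlib

section
/- Let L be a number field with ring of integers Z_L, and let P, Q ∈ Z_L[X] be nonzero polynomials of degrees d_P ≥ 1 and d_Q ≥ 1 respectively. Write s = d_P + d_Q and let R = Res(P, Q) ∈ Z_L be the resultant of P and Q. Then h(R) ≤ d_Q·h(P) + d_P·h(Q) + (s/2)·log(s). -/
open NumberField Polynomial IsDedekindDomain Nat
open scoped Classical

/-- The integer-valued `𝔭`-adic valuation on a number field `L`, normalized so that a
uniformizer has valuation `1` (with the junk value `0` at `x = 0`). -/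
noncomputable def intValOn {L : Type*} [Field L] [NumberField L]
    (v : HeightOneSpectrum (𝓞 L)) (x : L) : ℤ :=
  if h : x = 0 then 0
  else -Multiplicative.toAdd (WithZero.unzero ((v.valuation L).ne_zero_iff.mpr h))

/-- The normalized `𝔭`-adic absolute value `‖x‖_𝔭 = (N𝔭)^{-v_𝔭(x)}`, i.e. the `d_v`-th power
`|x|_v^{d_v}` of the absolute value `|·|_v` normalized by `|p|_v = 1/p`
(where `d_v = [L_v : ℚ_p]` is the local degree); thus for every `x ∈ L`,
`log (finAbs v x) = d_v · log |x|_v`. -/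
noncomputable def finAbs {L : Type*} [Field L] [NumberField L]
    (v : HeightOneSpectrum (𝓞 L)) (x : L) : ℝ :=
  if x = 0 then 0 else (Ideal.absNorm v.asIdeal : ℝ) ^ (-(intValOn v x))

/-- `|P|_v = max_i |a_i|_v` for `P = Σ_i a_i X^i` and `v` an absolute value on `L`. -/
noncomputable def polyNorm {L : Type*} [Field L] (v : L → ℝ) (P : L[X]) : ℝ :=
  ⨆ i, v (P.coeff i)

/-- The absolute logarithmic Weil height `h(x) = Σ_v (d_v/d_L) log max{1, |x|_v}` of `x ∈ L`:
the finite-place part is written using `finAbs` (recall `log (finAbs v x) = d_v log |x|_v`),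
and for an infinite place `v`, `d_v` is `InfinitePlace.mult v`. -/
noncomputable def elemHeight {L : Type*} [Field L] [NumberField L] (x : L) : ℝ :=
  (1 / (Module.finrank ℚ L : ℝ)) *
    ((∑ᶠ v : HeightOneSpectrum (𝓞 L), Real.log (max 1 (finAbs v x))) +
      ∑ v : InfinitePlace L, (v.mult : ℝ) * Real.log (max 1 (v x)))

/-- The height `h(P) = Σ_v (d_v/d_L) log max{1, |P|_v}` of a polynomial `P ∈ L[X]`. -/
noncomputable def polyHeight {L : Type*} [Field L] [NumberField L] (P : L[X]) : ℝ :=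
  (1 / (Module.finrank ℚ L : ℝ)) *
    ((∑ᶠ v : HeightOneSpectrum (𝓞 L), Real.log (max 1 (polyNorm (finAbs v) P))) +
      ∑ v : InfinitePlace L, (v.mult : ℝ) * Real.log (max 1 (polyNorm (⇑v) P)))

/-- The projective height `Σ_v (d_v/d_L) log max_c |c|_v` of the coefficient tuple of a pair of
polynomials `(P, Q)` (not both zero); for `P, Q` coprime with `F = P/Q` this is the height
`h(F)` of the rational fraction `F`, independent of the chosen representation. -/
noncomputable def pairHeight {L : Type*} [Field L] [NumberField L] (P Q : L[X]) : ℝ :=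
  (1 / (Module.finrank ℚ L : ℝ)) *
    ((∑ᶠ v : HeightOneSpectrum (𝓞 L),
        Real.log (max (polyNorm (finAbs v) P) (polyNorm (finAbs v) Q))) +
      ∑ v : InfinitePlace L, (v.mult : ℝ) *
        Real.log (max (polyNorm (⇑v) P) (polyNorm (⇑v) Q)))

/-- `h°(x) = (1/d_L) log |N_{L/ℚ}(x)|` for a nonzero algebraic integer `x`. -/
noncomputable def normHeight {L : Type*} [Field L] [NumberField L] (x : 𝓞 L) : ℝ :=
  (1 / (Module.finrank ℚ L : ℝ)) * Real.log |(Algebra.norm ℤ x : ℝ)|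

/-- The Sylvester matrix of two polynomials `P`, `Q` of degrees `dP`, `dQ`: a square matrix of
size `dQ + dP` whose first `dQ` rows contain the (descending) coefficients of `P` shifted, and
whose last `dP` rows contain the coefficients of `Q` shifted. -/
noncomputable def sylvester {R : Type*} [CommRing R] (P Q : Polynomial R) (dP dQ : ℕ) :
    Matrix (Fin dQ ⊕ Fin dP) (Fin (dQ + dP)) R :=
  Matrix.of fun i j =>
    match i with
    | Sum.inl k =>
        if (k : ℕ) ≤ (j : ℕ) ∧ (j : ℕ) ≤ (k : ℕ) + dP then P.coeff (dP + k - j) else 0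
    | Sum.inr k =>
        if (k : ℕ) ≤ (j : ℕ) ∧ (j : ℕ) ≤ (k : ℕ) + dQ then Q.coeff (dQ + k - j) else 0

/-- The resultant `Res(P, Q)`: the determinant of the Sylvester matrix of `P` and `Q`. -/
noncomputable def resultant {R : Type*} [CommRing R] (P Q : Polynomial R) : R :=
  Matrix.det ((_root_.sylvester P Q P.natDegree Q.natDegree).submatrix (⇑finSumFinEquiv.symm) id)

section Hadamard
open Matrix
open scoped ComplexOrder

noncomputable def Complex.abs : AbsoluteValue ℂ ℝ :=
  IsAbsoluteValue.toAbsoluteValue (norm : ℂ → ℝ)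

lemma Complex.norm_eq_abs (z : ℂ) : ‖z‖ = Complex.abs z := rfl

lemma Complex.sq_abs (z : ℂ) : Complex.abs z ^ 2 = Complex.normSq z := Complex.sq_norm z

lemma Complex.abs_ofReal (r : ℝ) : Complex.abs (r : ℂ) = |r| :=
  (Complex.norm_real r).trans (Real.norm_eq_abs r)

lemma my_trace_eq_sum_eigenvalues {n : Type*} [Fintype n] [DecidableEq n]
    (M : Matrix n n ℂ) (hM : M.IsHermitian) :
    M.trace = ∑ i, (hM.eigenvalues i : ℂ) := by
  exact hM.trace_eq_sum_eigenvalues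

lemma my_hadamard_norm {n : ℕ} (hn : 0 < n) (A : Matrix (Fin n) (Fin n) ℂ)
    (h : ∀ i j, Complex.abs (A i j) ≤ 1) :
    Complex.abs A.det ≤ Real.sqrt ((n : ℝ) ^ n) := by
  set M := A * Aᴴ with hMdef
  have hPSD : M.PosSemidef := posSemidef_self_mul_conjTranspose A
  have hM : M.IsHermitian := hPSD.1
  set lam := hM.eigenvalues with hlam
  have hlam0 : ∀ i, 0 ≤ lam i := hPSD.eigenvalues_nonneg
  have hdet : (Complex.abs A.det) ^ 2 = ∏ i, lam i := by
    have h1 : M.det = ∏ i, (lam i : ℂ) := hM.det_eq_prod_eigenvalues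
    have h2 : M.det = A.det * star A.det := by rw [hMdef, det_mul, det_conjTranspose]
    have h3 : A.det * star A.det = ((Complex.abs A.det ^ 2 : ℝ) : ℂ) := by
      rw [Complex.star_def, Complex.mul_conj, Complex.sq_abs]
    rw [h2, h3] at h1
    exact_mod_cast h1
  have hsum : ∑ i, lam i ≤ (n : ℝ) ^ 2 := by
    have ht : M.trace = ∑ i, (lam i : ℂ) := my_trace_eq_sum_eigenvalues M hM
    have ht2 : M.trace = ((∑ i, ∑ j, Complex.abs (A i j) ^ 2 : ℝ) : ℂ) := by
      simp only [hMdef, Matrix.trace, Matrix.diag, Matrix.mul_apply, Matrix.conjTranspose_apply]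
      push_cast
      congr 1
      ext i
      congr 1
      ext j
      rw [Complex.star_def, Complex.mul_conj]
      norm_cast
      exact (Complex.sq_abs _).symm
    have heq : ∑ i, lam i = ∑ i, ∑ j, Complex.abs (A i j) ^ 2 := by
      have := ht.symm.trans ht2
      exact_mod_cast this
    rw [heq]
    calc ∑ i : Fin n, ∑ j : Fin n, Complex.abs (A i j) ^ 2
        ≤ ∑ i : Fin n, ∑ j : Fin n, (1 : ℝ) := by
          refine Finset.sum_le_sum fun i _ => Finset.sum_le_sum fun j _ => ?_
          have := h i j
          nlinarith [AbsoluteValue.nonneg Complex.abs (A i j)]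
      _ = (n : ℝ) ^ 2 := by simp [sq]
  have hprod : ∏ i, lam i ≤ (n : ℝ) ^ n := by
    have hw : ∀ i ∈ Finset.univ (α := Fin n), (0 : ℝ) ≤ 1 / n := fun _ _ => by positivity
    have hw1 : ∑ _i : Fin n, (1 / n : ℝ) = 1 := by
      simp [Finset.sum_const]
      field_simp
    have hz : ∀ i ∈ Finset.univ (α := Fin n), (0 : ℝ) ≤ lam i := fun i _ => hlam0 i
    have key := Real.geom_mean_le_arith_mean_weighted Finset.univ (fun _ => 1 / n) lam hw hw1 hz
    have h2 : ∑ i : Fin n, (1 / n : ℝ) * lam i ≤ (n : ℝ) := by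
      rw [← Finset.mul_sum]
      rw [div_mul_eq_mul_div, one_mul, div_le_iff₀ (by positivity)]
      calc ∑ i, lam i ≤ (n : ℝ) ^ 2 := hsum
        _ = (n : ℝ) * n := sq (n:ℝ) ▸ by ring
    have hle : ∏ i : Fin n, lam i ^ (1 / n : ℝ) ≤ (n : ℝ) := key.trans h2
    have hrw : (∏ i : Fin n, lam i ^ (1 / n : ℝ)) ^ (n : ℕ) = ∏ i, lam i := by
      rw [← Finset.prod_pow]
      congr 1
      ext i
      rw [← Real.rpow_natCast (lam i ^ (1 / n : ℝ)) n, ← Real.rpow_mul (hlam0 i)]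
      rw [one_div, inv_mul_cancel₀ (by exact_mod_cast hn.ne' : (n : ℝ) ≠ 0), Real.rpow_one]
    calc ∏ i, lam i = (∏ i : Fin n, lam i ^ (1 / n : ℝ)) ^ (n : ℕ) := hrw.symm
      _ ≤ (n : ℝ) ^ n :=
        pow_le_pow_left₀ (Finset.prod_nonneg fun i _ => Real.rpow_nonneg (hlam0 i) _) hle n
  have h1 : Complex.abs A.det = Real.sqrt ((Complex.abs A.det) ^ 2) := by
    rw [Real.sqrt_sq (AbsoluteValue.nonneg _ _)]
  rw [h1]
  exact Real.sqrt_le_sqrt (hdet ▸ hprod)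

lemma my_hadamard {n : ℕ} (hn : 0 < n) (A : Matrix (Fin n) (Fin n) ℂ) (r : Fin n → ℝ)
    (h : ∀ i j, Complex.abs (A i j) ≤ r i) :
    Complex.abs A.det ≤ Real.sqrt ((n : ℝ) ^ n) * ∏ i, r i := by
  by_cases h0 : ∃ i, r i = 0
  · obtain ⟨i, hi⟩ := h0
    have hrow : ∀ j, A i j = 0 := fun j => by
      have := h i j
      rw [hi] at this
      exact Complex.abs.eq_zero.mp (le_antisymm this (AbsoluteValue.nonneg _ _))
    rw [Matrix.det_eq_zero_of_row_eq_zero i hrow]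
    rw [Finset.prod_eq_zero (Finset.mem_univ i) hi, mul_zero]
    simp
  · push_neg at h0
    have hrpos : ∀ i, 0 < r i := fun i =>
      lt_of_le_of_ne ((AbsoluteValue.nonneg Complex.abs (A i ⟨0, hn⟩)).trans (h i ⟨0, hn⟩))
        (Ne.symm (h0 i))
    set d : Fin n → ℂ := fun i => ((r i : ℂ))⁻¹ with hd
    set B := Matrix.diagonal d * A with hBdef
    have hBapp : ∀ i j, B i j = (r i : ℂ)⁻¹ * A i j := fun i j => by
      rw [hBdef, Matrix.diagonal_mul]
    have habs : ∀ i j, Complex.abs (B i j) ≤ 1 := by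
      intro i j
      rw [hBapp, _root_.map_mul, map_inv₀, Complex.abs_ofReal, abs_of_pos (hrpos i),
        inv_mul_eq_div, div_le_one (hrpos i)]
      exact h i j
    have hBle := my_hadamard_norm hn B habs
    set c : ℝ := ∏ i, r i with hc
    have hcpos : 0 < c := Finset.prod_pos fun i _ => hrpos i
    have habsB : Complex.abs B.det = c⁻¹ * Complex.abs A.det := by
      rw [hBdef, Matrix.det_mul, Matrix.det_diagonal, _root_.map_mul]
      congr 1
      rw [map_prod]
      rw [hc, ← Finset.prod_inv_distrib]
      apply Finset.prod_congr rfl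
      intro i _
      rw [hd, map_inv₀, Complex.abs_ofReal, abs_of_pos (hrpos i)]
    calc Complex.abs A.det = c * (c⁻¹ * Complex.abs A.det) := by field_simp
      _ = c * Complex.abs B.det := by rw [← habsB]
      _ ≤ c * Real.sqrt ((n : ℝ) ^ n) := mul_le_mul_of_nonneg_left hBle hcpos.le
      _ = Real.sqrt ((n : ℝ) ^ n) * ∏ i, r i := by rw [mul_comm, hc]

end Hadamard

/- ## Auxiliary lemmas -/

lemma finAbs_le_one {L : Type*} [Field L] [NumberField L]
    (v : HeightOneSpectrum (𝓞 L)) (x : 𝓞 L) : finAbs v (x : L) ≤ 1 := by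
  rw [finAbs]
  split_ifs with h
  · norm_num
  · have hval : v.valuation L ((x : L)) ≤ 1 := by
      rw [RingOfIntegers.coe_eq_algebraMap]
      exact v.valuation_le_one (K := L) x
    have hv : intValOn v (x : L) ≥ 0 := by
      rw [intValOn, dif_neg h]
      set u := WithZero.unzero ((v.valuation L).ne_zero_iff.mpr h) with hu
      have hcoe : (u : WithZero (Multiplicative ℤ)) ≤ 1 := by
        rw [hu, WithZero.coe_unzero]
        exact hval
      have hle : u ≤ 1 := by exact_mod_cast hcoe
      have : Multiplicative.toAdd u ≤ 0 := hle
      omega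
    have hbase : (1 : ℝ) ≤ (Ideal.absNorm v.asIdeal : ℝ) := by
      have h0 : Ideal.absNorm v.asIdeal ≠ 0 := by
        rw [Ne, Ideal.absNorm_eq_zero_iff]
        exact v.ne_bot
      exact_mod_cast Nat.one_le_iff_ne_zero.mpr h0
    exact zpow_le_one_of_nonpos₀ hbase (by omega)

lemma log_max_finAbs_eq_zero {L : Type*} [Field L] [NumberField L]
    (v : HeightOneSpectrum (𝓞 L)) (x : 𝓞 L) :
    Real.log (max 1 (finAbs v (x : L))) = 0 := by
  rw [max_eq_left (finAbs_le_one v x), Real.log_one]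

lemma log_max_polyNorm_finAbs_eq_zero {L : Type*} [Field L] [NumberField L]
    (v : HeightOneSpectrum (𝓞 L)) (P : Polynomial (𝓞 L)) :
    Real.log (max 1 (polyNorm (finAbs v) (P.map (algebraMap (𝓞 L) L)))) = 0 := by
  have hle : polyNorm (finAbs v) (P.map (algebraMap (𝓞 L) L)) ≤ 1 := by
    apply ciSup_le
    intro i
    rw [Polynomial.coeff_map, ← RingOfIntegers.coe_eq_algebraMap]
    exact finAbs_le_one v _
  rw [max_eq_left hle, Real.log_one]

lemma bdd_of_eventually {f : ℕ → ℝ} {N : ℕ} {c : ℝ} (h : ∀ i, N < i → f i = c) :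
    BddAbove (Set.range f) := by
  have hsub : Set.range f ⊆ (f '' Set.Iic N) ∪ {c} := by
    rintro x ⟨i, rfl⟩
    rcases le_or_gt i N with hi | hi
    · exact Or.inl ⟨i, hi, rfl⟩
    · exact Or.inr (h i hi)
  exact (((Set.finite_Iic N).image f).union (Set.finite_singleton c)).bddAbove.mono hsub

lemma place_coeff_le {L : Type*} [Field L] [NumberField L]
    (w : InfinitePlace L) (f : L[X]) (m : ℕ) :
    w (f.coeff m) ≤ polyNorm (⇑w) f := by
  apply le_ciSup (f := fun i => w (f.coeff i))
    (bdd_of_eventually (N := f.natDegree) (c := w 0) ?_) m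
  intro i hi
  rw [Polynomial.coeff_eq_zero_of_natDegree_lt hi]

lemma polyNorm_nonneg {L : Type*} [Field L] [NumberField L]
    (w : InfinitePlace L) (f : L[X]) : 0 ≤ polyNorm (⇑w) f :=
  Real.iSup_nonneg fun i => AbsoluteValue.nonneg _ _

/- ## Per-infinite-place inequality -/

lemma place_ineq {L : Type*} [Field L] [NumberField L]
    (P Q : Polynomial (𝓞 L)) (dP dQ : ℕ)
    (hdP : P.natDegree = dP) (hdQ : Q.natDegree = dQ) (hdP1 : 1 ≤ dP) (hdQ1 : 1 ≤ dQ)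
    (w : InfinitePlace L) :
    Real.log (max 1 (w ((_root_.resultant P Q : 𝓞 L) : L))) ≤
      (dQ : ℝ) * Real.log (max 1 (polyNorm (⇑w) (P.map (algebraMap (𝓞 L) L))))
      + (dP : ℝ) * Real.log (max 1 (polyNorm (⇑w) (Q.map (algebraMap (𝓞 L) L))))
      + (((dP : ℝ) + dQ) / 2) * Real.log ((dP : ℝ) + dQ) := by
  subst hdP hdQ
  set dP := P.natDegree
  set dQ := Q.natDegree
  set τ : 𝓞 L →+* ℂ := (w.embedding).comp (algebraMap (𝓞 L) L) with hτdef
  have hτ : ∀ y : 𝓞 L, Complex.abs (τ y) = w ((y : L)) := by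
    intro y
    rw [← Complex.norm_eq_abs, hτdef, RingHom.comp_apply,
      ← RingOfIntegers.coe_eq_algebraMap, InfinitePlace.norm_embedding_eq]
  set n := dQ + dP with hn
  have hnpos : 0 < n := by omega
  set M0 := (_root_.sylvester P Q dP dQ).submatrix (⇑finSumFinEquiv.symm) id with hM0
  set A := M0.map τ with hA
  set NP := max 1 (polyNorm (⇑w) (P.map (algebraMap (𝓞 L) L))) with hNP
  set NQ := max 1 (polyNorm (⇑w) (Q.map (algebraMap (𝓞 L) L))) with hNQ
  have hNP1 : (1 : ℝ) ≤ NP := le_max_left _ _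
  have hNQ1 : (1 : ℝ) ≤ NQ := le_max_left _ _
  have hPb : ∀ m : ℕ, Complex.abs (τ (P.coeff m)) ≤ NP := by
    intro m
    rw [hτ]
    refine le_trans ?_ (le_max_right _ _)
    have : ((P.coeff m : L)) = (P.map (algebraMap (𝓞 L) L)).coeff m := by
      rw [Polynomial.coeff_map, RingOfIntegers.coe_eq_algebraMap]
    rw [this]
    exact place_coeff_le w _ m
  have hQb : ∀ m : ℕ, Complex.abs (τ (Q.coeff m)) ≤ NQ := by
    intro m
    rw [hτ]
    refine le_trans ?_ (le_max_right _ _)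
    have : ((Q.coeff m : L)) = (Q.map (algebraMap (𝓞 L) L)).coeff m := by
      rw [Polynomial.coeff_map, RingOfIntegers.coe_eq_algebraMap]
    rw [this]
    exact place_coeff_le w _ m
  set r : Fin n → ℝ := fun i => Sum.elim (fun _ => NP) (fun _ => NQ) (finSumFinEquiv.symm i)
    with hr
  have hbound : ∀ i j, Complex.abs (A i j) ≤ r i := by
    intro i j
    rw [hA, Matrix.map_apply, hM0, Matrix.submatrix_apply, hr]
    show Complex.abs (τ (_root_.sylvester P Q dP dQ (finSumFinEquiv.symm i) (id j))) ≤
      Sum.elim (fun _ => NP) (fun _ => NQ) (finSumFinEquiv.symm i)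
    generalize finSumFinEquiv.symm i = x
    cases x with
    | inl k =>
      simp only [Sum.elim_inl, id_eq]
      simp only [_root_.sylvester, Matrix.of_apply]
      split_ifs
      · exact hPb _
      · rw [map_zero, map_zero]
        linarith
    | inr k =>
      simp only [Sum.elim_inr, id_eq]
      simp only [_root_.sylvester, Matrix.of_apply]
      split_ifs
      · exact hQb _
      · rw [map_zero, map_zero]
        linarith
  have hdetA : Complex.abs A.det = w ((_root_.resultant P Q : 𝓞 L) : L) := by
    have hAd : τ (_root_.resultant P Q) = A.det := by
      rw [_root_.resultant, RingHom.map_det, RingHom.mapMatrix_apply]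
    rw [← hAd, hτ]
  have hprod : ∏ i, r i = NP ^ dQ * NQ ^ dP := by
    rw [hr]
    rw [Equiv.prod_comp finSumFinEquiv.symm (Sum.elim (fun _ => NP) (fun _ => NQ))]
    rw [Fintype.prod_sum_type]
    simp [Finset.prod_const]
  have hHad := my_hadamard hnpos A r hbound
  rw [hdetA, hprod] at hHad
  set V := Real.sqrt ((n : ℝ) ^ n) * (NP ^ dQ * NQ ^ dP) with hV
  have hsqrt1 : (1 : ℝ) ≤ Real.sqrt ((n : ℝ) ^ n) := by
    rw [show (1 : ℝ) = Real.sqrt 1 by rw [Real.sqrt_one]]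
    apply Real.sqrt_le_sqrt
    apply one_le_pow₀
    exact_mod_cast hnpos
  have hV1 : (1 : ℝ) ≤ V := by
    rw [hV]
    have h1 : (1:ℝ) ≤ NP ^ dQ := one_le_pow₀ hNP1
    have h2 : (1:ℝ) ≤ NQ ^ dP := one_le_pow₀ hNQ1
    have h3 : (1:ℝ) ≤ NP ^ dQ * NQ ^ dP := by nlinarith
    nlinarith [h3, hsqrt1]
  have hmax : max 1 (w ((_root_.resultant P Q : 𝓞 L) : L)) ≤ V := max_le hV1 hHad
  have hlog := Real.log_le_log (by positivity) hmax
  refine hlog.trans (le_of_eq ?_)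
  rw [hV, Real.log_mul (by positivity) (by positivity),
    Real.log_mul (by positivity) (by positivity),
    Real.log_sqrt (by positivity), Real.log_pow, Real.log_pow, Real.log_pow]
  have hcast : ((n : ℝ)) = (dP : ℝ) + dQ := by rw [hn]; push_cast; ring
  rw [hcast]
  ring

/- ## Main theorem -/


/-- Let `P, Q ∈ Z_L[X]` be nonzero polynomials of degrees `dP ≥ 1` and
`dQ ≥ 1`, let `s = dP + dQ` and let `R = Res(P, Q) ∈ Z_L` be the resultant. Then
`h(R) ≤ dQ·h(P) + dP·h(Q) + (s/2)·log s`. -/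
theorem stmt_12 {L : Type*} [Field L] [NumberField L]
    (P Q : Polynomial (𝓞 L)) (hP : P ≠ 0) (hQ : Q ≠ 0)
    (dP dQ : ℕ) (hdP : P.natDegree = dP) (hdQ : Q.natDegree = dQ)
    (hdP1 : 1 ≤ dP) (hdQ1 : 1 ≤ dQ)
    (s : ℕ) (hs : s = dP + dQ) (R : 𝓞 L) (hR : R = _root_.resultant P Q) :
    elemHeight ((R : 𝓞 L) : L) ≤
      (dQ : ℝ) * polyHeight (P.map (algebraMap (𝓞 L) L))
      + (dP : ℝ) * polyHeight (Q.map (algebraMap (𝓞 L) L))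
      + ((s : ℝ) / 2) * Real.log (s : ℝ) := by
  subst hs hR
  set d : ℕ := Module.finrank ℚ L with hdfr
  have hdpos : (0 : ℝ) < d := by
    exact_mod_cast Module.finrank_pos (R := ℚ) (M := L)
  -- finite parts vanish
  have e1 : (∑ᶠ v : HeightOneSpectrum (𝓞 L),
      Real.log (max 1 (finAbs v ((_root_.resultant P Q : 𝓞 L) : L)))) = 0 := by
    rw [finsum_congr fun v => log_max_finAbs_eq_zero v _]
    exact finsum_zero
  have e2 : (∑ᶠ v : HeightOneSpectrum (𝓞 L),
      Real.log (max 1 (polyNorm (finAbs v) (P.map (algebraMap (𝓞 L) L))))) = 0 := by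
    rw [finsum_congr fun v => log_max_polyNorm_finAbs_eq_zero v P]
    exact finsum_zero
  have e3 : (∑ᶠ v : HeightOneSpectrum (𝓞 L),
      Real.log (max 1 (polyNorm (finAbs v) (Q.map (algebraMap (𝓞 L) L))))) = 0 := by
    rw [finsum_congr fun v => log_max_polyNorm_finAbs_eq_zero v Q]
    exact finsum_zero
  rw [elemHeight, polyHeight, polyHeight, e1, e2, e3, zero_add, zero_add, zero_add]
  set SR := ∑ v : InfinitePlace L, (v.mult : ℝ) *
    Real.log (max 1 (v ((_root_.resultant P Q : 𝓞 L) : L))) with hSR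
  set SP := ∑ v : InfinitePlace L, (v.mult : ℝ) *
    Real.log (max 1 (polyNorm (⇑v) (P.map (algebraMap (𝓞 L) L)))) with hSP
  set SQ := ∑ v : InfinitePlace L, (v.mult : ℝ) *
    Real.log (max 1 (polyNorm (⇑v) (Q.map (algebraMap (𝓞 L) L)))) with hSQ
  set c0 : ℝ := (((dP : ℝ) + dQ) / 2) * Real.log ((dP : ℝ) + dQ) with hc0
  have hkey : SR ≤ (dQ : ℝ) * SP + (dP : ℝ) * SQ + (d : ℝ) * c0 := by
    have hstep : SR ≤ ∑ v : InfinitePlace L, (v.mult : ℝ) *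
        ((dQ : ℝ) * Real.log (max 1 (polyNorm (⇑v) (P.map (algebraMap (𝓞 L) L))))
          + (dP : ℝ) * Real.log (max 1 (polyNorm (⇑v) (Q.map (algebraMap (𝓞 L) L))))
          + c0) := by
      rw [hSR]
      refine Finset.sum_le_sum fun v _ => ?_
      refine mul_le_mul_of_nonneg_left ?_ (by positivity)
      exact place_ineq P Q dP dQ hdP hdQ hdP1 hdQ1 v
    refine hstep.trans (le_of_eq ?_)
    have hexp : ∀ v : InfinitePlace L, (v.mult : ℝ) *
        ((dQ : ℝ) * Real.log (max 1 (polyNorm (⇑v) (P.map (algebraMap (𝓞 L) L))))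
          + (dP : ℝ) * Real.log (max 1 (polyNorm (⇑v) (Q.map (algebraMap (𝓞 L) L))))
          + c0)
        = (dQ : ℝ) * ((v.mult : ℝ) *
            Real.log (max 1 (polyNorm (⇑v) (P.map (algebraMap (𝓞 L) L)))))
          + (dP : ℝ) * ((v.mult : ℝ) *
            Real.log (max 1 (polyNorm (⇑v) (Q.map (algebraMap (𝓞 L) L)))))
          + c0 * (v.mult : ℝ) := fun v => by ring
    rw [Finset.sum_congr rfl fun v _ => hexp v]
    rw [Finset.sum_add_distrib, Finset.sum_add_distrib, ← Finset.mul_sum, ← Finset.mul_sum,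
      ← Finset.mul_sum]
    have hmult : ∑ v : InfinitePlace L, (v.mult : ℝ) = (d : ℝ) := by
      rw [hdfr]
      exact_mod_cast InfinitePlace.sum_mult_eq (K := L)
    rw [hmult, ← hSP, ← hSQ]
    ring
  have hfinal := mul_le_mul_of_nonneg_left hkey
    (le_of_lt (by positivity : (0:ℝ) < 1 / (d : ℝ)))
  calc (1 / (d : ℝ)) * SR
      ≤ (1 / (d : ℝ)) * ((dQ : ℝ) * SP + (dP : ℝ) * SQ + (d : ℝ) * c0) := hfinal
    _ = (dQ : ℝ) * ((1 / (d : ℝ)) * SP) + (dP : ℝ) * ((1 / (d : ℝ)) * SQ)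
        + (((dP : ℕ) + (dQ : ℕ) : ℕ) : ℝ) / 2 * Real.log (((dP : ℕ) + (dQ : ℕ) : ℕ) : ℝ) := by
      rw [hc0]
      push_cast
      field_simp
end

section
/- Let L be a number field of degree d_L over ℚ with ring of integers Z_L, and let R ∈ Z_L be a nonzero non-unit. Then Σ_𝔭 log(N_{L/ℚ}(𝔭))/(p−1) ≤ d_L·(2·log log|N_{L/ℚ}(R)| + 3.5), where the sum is over the prime ideals 𝔭 of Z_L dividing R, and for each such 𝔭, p denotes the rational prime below 𝔭. -/
open NumberField Polynomial IsDedekindDomain Nat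
open scoped Classical

/-- Sum of `log p / (p-1)` over primes `p ≤ M`. -/
noncomputable def SSum (M : ℕ) : ℝ :=
  ∑ p ∈ (Finset.range (M+1)).filter Nat.Prime, Real.log p / ((p : ℝ) - 1)

/-- Chebyshev `θ(M)`. -/
noncomputable def thetaSum (M : ℕ) : ℝ :=
  ∑ p ∈ (Finset.range (M+1)).filter Nat.Prime, Real.log p

lemma thetaSum_le (M : ℕ) : thetaSum M ≤ M * (2 * Real.log 2) := by
  have h1 : thetaSum M = Real.log (primorial M) := by
    rw [primorial, Nat.cast_prod, Real.log_prod]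
    · rfl
    intro p hp
    simp only [Finset.mem_filter] at hp
    exact_mod_cast hp.2.pos.ne'
  rw [h1]
  calc Real.log (primorial M) ≤ Real.log ((4:ℕ) ^ M) := by
        apply Real.log_le_log (by exact_mod_cast (primorial_pos M))
        exact_mod_cast primorial_le_4_pow M
    _ = M * (2 * Real.log 2) := by
        rw [Real.log_pow, show ((4:ℕ):ℝ) = 2^2 by norm_num, Real.log_pow]
        push_cast; ring

lemma thetaSum_nonneg (M : ℕ) : 0 ≤ thetaSum M := by
  apply Finset.sum_nonneg
  intro p hp
  simp only [Finset.mem_filter] at hp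
  exact Real.log_nonneg (by exact_mod_cast hp.2.one_lt.le)

lemma SSum_mono {M M' : ℕ} (h : M ≤ M') : SSum M ≤ SSum M' := by
  apply Finset.sum_le_sum_of_subset_of_nonneg
  · apply Finset.filter_subset_filter
    exact Finset.range_subset_range.mpr (by omega)
  · intro p hp _
    simp only [Finset.mem_filter] at hp
    have h2 : (2:ℝ) ≤ p := by exact_mod_cast hp.2.two_le
    apply div_nonneg (Real.log_nonneg (by linarith)) (by linarith)

lemma SSum_gap (N : ℕ) (hN : 1 ≤ N) :
    SSum (2*N) ≤ SSum N + (thetaSum (2*N) - thetaSum N) / N := by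
  have hsub : (Finset.range (N+1)).filter Nat.Prime ⊆ (Finset.range (2*N+1)).filter Nat.Prime :=
    Finset.filter_subset_filter _ (Finset.range_subset_range.mpr (by omega))
  have hsplit := Finset.sum_sdiff (f := fun p : ℕ => Real.log p / ((p:ℝ) - 1)) hsub
  have hsplit2 := Finset.sum_sdiff (f := fun p : ℕ => Real.log p) hsub
  have hdiff : ∑ p ∈ ((Finset.range (2*N+1)).filter Nat.Prime) \ ((Finset.range (N+1)).filter Nat.Prime),
      Real.log p = thetaSum (2*N) - thetaSum N := by
    rw [thetaSum, thetaSum, ← hsplit2]; ring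
  have key : ∑ p ∈ ((Finset.range (2*N+1)).filter Nat.Prime) \ ((Finset.range (N+1)).filter Nat.Prime),
      Real.log p / ((p:ℝ) - 1)
      ≤ (∑ p ∈ ((Finset.range (2*N+1)).filter Nat.Prime) \ ((Finset.range (N+1)).filter Nat.Prime),
      Real.log p) / N := by
    rw [Finset.sum_div]
    apply Finset.sum_le_sum
    intro p hp
    simp only [Finset.mem_sdiff, Finset.mem_filter, Finset.mem_range] at hp
    have hpN : N + 1 ≤ p := by
      by_contra h
      exact hp.2 ⟨by omega, hp.1.2⟩
    have hlog : 0 ≤ Real.log p := Real.log_nonneg (by exact_mod_cast hp.1.2.one_lt.le)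
    apply div_le_div_of_nonneg_left hlog (by exact_mod_cast hN)
    have : (N:ℝ) + 1 ≤ p := by exact_mod_cast hpN
    linarith
  rw [hdiff] at key
  rw [SSum, ← hsplit, SSum]
  linarith [key]

lemma phi_step (K : ℕ) :
    SSum (2^(K+1)) - thetaSum (2^(K+1)) / (2:ℝ)^(K+1)
      ≤ (SSum (2^K) - thetaSum (2^K) / (2:ℝ)^K) + 2 * Real.log 2 := by
  have hgap := SSum_gap (2^K) Nat.one_le_two_pow
  have hpow : 2 * 2^K = 2^(K+1) := by ring
  rw [hpow] at hgap
  have hθ := thetaSum_le (2^(K+1))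
  have hx : (0:ℝ) < (2:ℝ)^K := by positivity
  have hcast : ((2^K : ℕ) : ℝ) = (2:ℝ)^K := by push_cast; ring
  have hcast2 : ((2^(K+1) : ℕ) : ℝ) = 2 * (2:ℝ)^K := by push_cast; ring
  rw [hcast] at hgap
  rw [hcast2] at hθ
  set A := SSum (2^(K+1)); set B := SSum (2^K)
  set C := thetaSum (2^(K+1)); set D := thetaSum (2^K)
  have e1 : (C - D) / (2:ℝ)^K = C / (2:ℝ)^K - D / (2:ℝ)^K := by ring
  have e2 : (2:ℝ)^(K+1) = 2 * (2:ℝ)^K := by ring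
  have e3 : C / (2 * (2:ℝ)^K) ≤ 2 * Real.log 2 := by
    rw [div_le_iff₀ (by positivity)]
    nlinarith [Real.log_two_gt_d9]
  have e4 : C / (2:ℝ)^K - C / (2 * (2:ℝ)^K) = C / (2 * (2:ℝ)^K) := by ring
  rw [e2]
  rw [e1] at hgap
  linarith

lemma phi_bound : ∀ K : ℕ, 2 ≤ K →
    SSum (2^K) - thetaSum (2^K) / (2:ℝ)^K
      ≤ (SSum 4 - thetaSum 4 / 4) + ((K:ℝ) - 2) * (2 * Real.log 2) := by
  intro K hK
  induction K, hK using Nat.le_induction with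
  | base => norm_num
  | succ K hK ih =>
    have := phi_step K
    have hc : ((K:ℝ) + 1 - 2) * (2 * Real.log 2)
        = ((K:ℝ) - 2) * (2 * Real.log 2) + 2 * Real.log 2 := by ring
    push_cast
    rw [hc]
    linarith

lemma SSum_pow_le (K : ℕ) (hK : 2 ≤ K) :
    SSum (2^K) ≤ 2 * K * Real.log 2 + (SSum 4 - thetaSum 4 / 4 - 2 * Real.log 2) := by
  have h1 := phi_bound K hK
  have h2 := thetaSum_le (2^K)
  have hx : (0:ℝ) < (2:ℝ)^K := by positivity
  have hcast : ((2^K : ℕ) : ℝ) = (2:ℝ)^K := by push_cast; ring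
  rw [hcast] at h2
  have h3 : thetaSum (2^K) / (2:ℝ)^K ≤ 2 * Real.log 2 := by
    rw [div_le_iff₀ hx]; nlinarith
  nlinarith [h1, h3]

lemma SSum_le (M : ℕ) (hM : 3 ≤ M) :
    SSum M ≤ 2 * Real.log M + (SSum 4 - thetaSum 4 / 4) := by
  set K := Nat.log 2 M + 1 with hKdef
  have hlog1 : 1 ≤ Nat.log 2 M := by
    rw [Nat.le_log_iff_pow_le (by norm_num) (by omega)]
    omega
  have hK2 : 2 ≤ K := by omega
  have hM2K : M ≤ 2^K := (Nat.lt_pow_succ_log_self (by norm_num) M).le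
  have h2KM : 2^K ≤ 2*M := by
    have := Nat.pow_log_le_self 2 (show M ≠ 0 by omega)
    calc 2^K = 2 * 2^(Nat.log 2 M) := by rw [hKdef]; ring
      _ ≤ 2 * M := by omega
  have h1 : SSum M ≤ SSum (2^K) := SSum_mono hM2K
  have h2 := SSum_pow_le K hK2
  have h3 : 2 * (K:ℝ) * Real.log 2 ≤ 2 * Real.log 2 + 2 * Real.log M := by
    have e1 : Real.log ((2:ℝ)^K) = (K:ℝ) * Real.log 2 := by
      rw [Real.log_pow]
    have e2 : Real.log ((2:ℝ)^K) ≤ Real.log (2 * M) := by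
      apply Real.log_le_log (by positivity)
      calc ((2:ℝ))^K = ((2^K : ℕ) : ℝ) := by push_cast; ring
        _ ≤ ((2*M : ℕ) : ℝ) := by exact_mod_cast h2KM
        _ = 2 * M := by push_cast; ring
    have e3 : Real.log (2 * (M:ℝ)) = Real.log 2 + Real.log M := by
      rw [Real.log_mul (by norm_num) (by positivity)]
    nlinarith [e1, e2, e3]
  linarith

lemma filter_prime_four : (Finset.range 4).filter Nat.Prime = {2, 3} := by
  ext p
  simp only [Finset.mem_filter, Finset.mem_range, Finset.mem_insert, Finset.mem_singleton]
  constructor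
  · rintro ⟨h5, hp⟩
    interval_cases p <;> revert hp <;> norm_num
  · rintro (rfl|rfl) <;> norm_num
  
lemma filter_prime_five : (Finset.range 5).filter Nat.Prime = {2, 3} := by
  ext p
  simp only [Finset.mem_filter, Finset.mem_range, Finset.mem_insert, Finset.mem_singleton]
  constructor
  · rintro ⟨h5, hp⟩
    interval_cases p <;> revert hp <;> norm_num
  · rintro (rfl|rfl) <;> norm_num

lemma SSum_four : SSum 4 = Real.log 2 + Real.log 3 / 2 := by
  rw [SSum, show (4:ℕ)+1 = 5 from rfl, filter_prime_five,
    Finset.sum_insert (by norm_num), Finset.sum_singleton]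
  norm_num

lemma SSum_three : SSum 3 = Real.log 2 + Real.log 3 / 2 := by
  rw [SSum, show (3:ℕ)+1 = 4 from rfl, filter_prime_four,
    Finset.sum_insert (by norm_num), Finset.sum_singleton]
  norm_num

lemma theta_four : thetaSum 4 = Real.log 2 + Real.log 3 := by
  rw [thetaSum, show (4:ℕ)+1 = 5 from rfl, filter_prime_five,
    Finset.sum_insert (by norm_num), Finset.sum_singleton]
  norm_num

lemma log_three_le : Real.log 3 ≤ Real.log 2 + 1/2 := by
  have h1 : Real.log 3 = Real.log 2 + Real.log (3/2) := by
    rw [← Real.log_mul (by norm_num) (by norm_num)]; norm_num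
  have h2 : Real.log (3/2 : ℝ) ≤ 3/2 - 1 := Real.log_le_sub_one_of_pos (by norm_num)
  linarith

/-- Final Mertens-type bound: `Σ_{p ≤ M} log p/(p-1) ≤ 2 log M + 0.82` for `M ≥ 3`. -/
lemma SSum_le' (M : ℕ) (hM : 3 ≤ M) : SSum M ≤ 2 * Real.log M + 0.82 := by
  have h := SSum_le M hM
  rw [SSum_four, theta_four] at h
  have l2 := Real.log_two_lt_d9
  have l3 := log_three_le
  nlinarith


section NT
variable {L : Type*} [Field L] [NumberField L]

lemma aux_prime_mem (𝔭 : Ideal (𝓞 L)) (hp : 𝔭.IsPrime) :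
    ∀ m : ℕ, m ≠ 0 → ((m : 𝓞 L) ∈ 𝔭) → ∃ q : ℕ, q.Prime ∧ (q : 𝓞 L) ∈ 𝔭 := by
  intro m
  induction m using Nat.strong_induction_on with
  | _ m ih =>
    intro hm0 hmem
    rcases eq_or_ne m 1 with rfl | hm1
    · exact absurd (𝔭.eq_top_iff_one.mpr (by simpa using hmem)) hp.ne_top
    · have hq := Nat.minFac_prime hm1
      have hdvd := Nat.minFac_dvd m
      have heq : m = m.minFac * (m / m.minFac) := (Nat.mul_div_cancel' hdvd).symm
      rw [heq, Nat.cast_mul] at hmem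
      rcases hp.mem_or_mem hmem with h | h
      · exact ⟨m.minFac, hq, h⟩
      · have hlt : m / m.minFac < m := Nat.div_lt_self (by omega) hq.one_lt
        have hne : m / m.minFac ≠ 0 := by
          have := Nat.div_pos (Nat.le_of_dvd (by omega) hdvd) hq.pos
          omega
        exact ih _ hlt hne h

lemma absNorm_span_natCast (q : ℕ) :
    Ideal.absNorm (Ideal.span {(q : 𝓞 L)}) = q ^ Module.finrank ℚ L := by
  rw [Ideal.absNorm_span_singleton]
  have h1 : ((q : 𝓞 L)) = algebraMap ℤ (𝓞 L) (q : ℤ) := by simp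
  rw [h1, Algebra.norm_algebraMap_of_basis (Module.Free.chooseBasis ℤ (𝓞 L)),
    ← Module.finrank_eq_card_chooseBasisIndex, NumberField.RingOfIntegers.rank,
    ← Nat.cast_pow, Int.natAbs_natCast]

lemma minFac_fact (𝔭 : Ideal (𝓞 L)) (hp : 𝔭.IsPrime) (hb : 𝔭 ≠ ⊥) :
    2 ≤ Ideal.absNorm 𝔭 ∧ ((Ideal.absNorm 𝔭).minFac).Prime ∧
      (((Ideal.absNorm 𝔭).minFac : ℕ) : 𝓞 L) ∈ 𝔭 := by
  have h0 : Ideal.absNorm 𝔭 ≠ 0 := by rw [Ne, Ideal.absNorm_eq_zero_iff]; exact hb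
  have h1 : Ideal.absNorm 𝔭 ≠ 1 := by rw [Ne, Ideal.absNorm_eq_one_iff]; exact hp.ne_top
  have h2 : 2 ≤ Ideal.absNorm 𝔭 := by omega
  obtain ⟨q, hq, hqm⟩ := aux_prime_mem 𝔭 hp _ h0 (Ideal.absNorm_mem 𝔭)
  have hle : Ideal.span {(q : 𝓞 L)} ≤ 𝔭 := (Ideal.span_singleton_le_iff_mem 𝔭).mpr hqm
  have hdvd : Ideal.absNorm 𝔭 ∣ q ^ Module.finrank ℚ L := by
    have := Ideal.absNorm_dvd_absNorm_of_le hle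
    rwa [absNorm_span_natCast] at this
  obtain ⟨j, hj, hjeq⟩ := (Nat.dvd_prime_pow hq).mp hdvd
  have hj0 : j ≠ 0 := by rintro rfl; rw [pow_zero] at hjeq; omega
  have hmf : (Ideal.absNorm 𝔭).minFac = q := by rw [hjeq, hq.pow_minFac hj0]
  exact ⟨h2, hmf ▸ hq, hmf ▸ hqm⟩

lemma prod_primes_dvd (I : Ideal (𝓞 L)) (F : Finset (Ideal (𝓞 L)))
    (h : ∀ 𝔭 ∈ F, 𝔭.IsPrime ∧ 𝔭 ≠ ⊥ ∧ I ≤ 𝔭) : (∏ 𝔭 ∈ F, 𝔭) ∣ I := by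
  classical
  induction F using Finset.induction_on with
  | empty => simpa using one_dvd I
  | @insert a s ha ih =>
    rw [Finset.prod_insert ha]
    obtain ⟨hpa, hba, hIa⟩ := h a (Finset.mem_insert_self a s)
    have hcop : IsCoprime a (∏ 𝔭 ∈ s, 𝔭) := by
      apply IsCoprime.prod_right
      intro b hb
      obtain ⟨hpb, hbb, _⟩ := h b (Finset.mem_insert_of_mem hb)
      rw [Ideal.isCoprime_iff_sup_eq]
      exact Ideal.IsMaximal.coprime_of_ne (hpa.isMaximal hba) (hpb.isMaximal hbb)
        (fun hEq => ha (hEq ▸ hb))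
    exact hcop.mul_dvd (Ideal.dvd_iff_le.mpr hIa)
      (ih (fun b hb => h b (Finset.mem_insert_of_mem hb)))

end NT

lemma inner_bound (u : ℝ) (hu : Real.log 2 ≤ u) :
    SSum (max 3 ⌊u⌋₊) + u / ((max 3 ⌊u⌋₊ : ℕ) : ℝ) ≤ 2 * Real.log u + 3.5 := by
  have l2u := Real.log_two_gt_d9
  have l2o := Real.log_two_lt_d9
  have hup : 0 < u := by linarith
  set M : ℕ := max 3 ⌊u⌋₊ with hM
  have hM3 : 3 ≤ M := le_max_left _ _
  have hMR : (3:ℝ) ≤ (M:ℝ) := by exact_mod_cast hM3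
  rcases le_or_gt 3 u with h3u | h3u
  · have hfl3 : 3 ≤ ⌊u⌋₊ := Nat.le_floor (by exact_mod_cast h3u)
    have hMeq : M = ⌊u⌋₊ := max_eq_right hfl3
    have hMle : (M:ℝ) ≤ u := by rw [hMeq]; exact Nat.floor_le hup.le
    have hMge : u - 1 ≤ (M:ℝ) := by
      rw [hMeq]; have := Nat.lt_floor_add_one u; linarith
    have h1 : SSum M ≤ 2 * Real.log M + 0.82 := SSum_le' M hM3
    have h2 : Real.log (M:ℝ) ≤ Real.log u := Real.log_le_log (by linarith) hMle
    have h3 : u / (M:ℝ) ≤ 3/2 := by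
      rw [div_le_iff₀ (by linarith)]
      linarith
    linarith
  · have hfl : ⌊u⌋₊ ≤ 3 := by
      have h4 : ⌊u⌋₊ < 3 := by
        rw [Nat.floor_lt hup.le]; exact_mod_cast h3u
      omega
    have hMeq : M = 3 := max_eq_left hfl
    have hS3 : SSum M = Real.log 2 + Real.log 3 / 2 := by rw [hMeq]; exact SSum_three
    have hdiv : u / (M:ℝ) ≤ 1 := by
      rw [hMeq, div_le_one (by norm_num)]
      push_cast
      linarith
    have hlogu : Real.log (Real.log 2) ≤ Real.log u := Real.log_le_log (by linarith) hu
    have hll : 1 - (Real.log 2)⁻¹ ≤ Real.log (Real.log 2) := by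
      have h := Real.log_le_sub_one_of_pos (x := (Real.log 2)⁻¹) (by positivity)
      rw [Real.log_inv] at h
      linarith
    have hinv : (Real.log 2)⁻¹ ≤ 1.443 := by
      have h5 : (Real.log 2)⁻¹ ≤ ((0.6931471803 : ℝ))⁻¹ :=
        inv_anti₀ (by norm_num) l2u.le
      have h6 : ((0.6931471803 : ℝ))⁻¹ ≤ 1.443 := by norm_num
      linarith
    have l3 := log_three_le
    linarith

/-- Let `R ∈ Z_L` be a nonzero non-unit. Then
`Σ_𝔭 log(N(𝔭))/(p−1) ≤ d_L·(2·log log |N_{L/ℚ}(R)| + 3.5)`, the sum running over the prime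
ideals `𝔭` of `Z_L` containing `R`; here `p`, the rational prime below `𝔭`, is recovered as
the smallest prime factor `(N𝔭).minFac` of the prime-power `N𝔭`. -/
theorem stmt_15 {L : Type*} [Field L] [NumberField L]
    (R : 𝓞 L) (hR : R ≠ 0) (hRu : ¬IsUnit R) :
    (∑ᶠ 𝔭 ∈ {𝔭 : Ideal (𝓞 L) | 𝔭.IsPrime ∧ R ∈ 𝔭},
        Real.log (Ideal.absNorm 𝔭 : ℝ) / (((Ideal.absNorm 𝔭).minFac : ℝ) - 1))
      ≤ (Module.finrank ℚ L : ℝ) *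
          (2 * Real.log (Real.log |(Algebra.norm ℤ R : ℝ)|) + 3.5) := by
  classical
  have hd0 : 0 < Module.finrank ℚ L := Module.finrank_pos
  have hd1 : (1:ℝ) ≤ (Module.finrank ℚ L : ℝ) := by exact_mod_cast hd0
  set n : ℕ := (Algebra.norm ℤ R).natAbs with hn
  have hspan_ne : Ideal.span {R} ≠ ⊥ := by
    simpa [Ideal.span_singleton_eq_bot] using hR
  have hnorm_span : Ideal.absNorm (Ideal.span {R}) = n := Ideal.absNorm_span_singleton R
  have hn0 : n ≠ 0 := by
    intro h; exact hspan_ne (by rw [← Ideal.absNorm_eq_zero_iff, hnorm_span, h])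
  have hn1 : n ≠ 1 := by
    intro h
    have htop : Ideal.span {R} = ⊤ := by rw [← Ideal.absNorm_eq_one_iff, hnorm_span, h]
    exact hRu (Ideal.span_singleton_eq_top.mp htop)
  have hn2 : 2 ≤ n := by omega
  have habs : |((Algebra.norm ℤ R : ℤ) : ℝ)| = (n : ℝ) := by
    rw [hn, Nat.cast_natAbs, Int.cast_abs]
  set u : ℝ := Real.log (n : ℝ) with hu
  have hulog2 : Real.log 2 ≤ u := Real.log_le_log (by norm_num) (by exact_mod_cast hn2)
  have hupos : 0 < u := lt_of_lt_of_le (Real.log_pos (by norm_num)) hulog2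
  have hSfin : {𝔭 : Ideal (𝓞 L) | 𝔭.IsPrime ∧ R ∈ 𝔭}.Finite := by
    apply Set.Finite.subset ((Ideal.finite_factors hspan_ne).image
      (fun v : HeightOneSpectrum (𝓞 L) => v.asIdeal))
    rintro 𝔭 ⟨hp, hmem⟩
    refine ⟨⟨𝔭, hp, ?_⟩, ?_, rfl⟩
    · intro hbot; exact hR (by simpa [hbot] using hmem)
    · exact Ideal.dvd_iff_le.mpr ((Ideal.span_singleton_le_iff_mem 𝔭).mpr hmem)
  rw [show Real.log |((Algebra.norm ℤ R : ℤ) : ℝ)| = u by rw [habs]]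
  rw [← hSfin.coe_toFinset, finsum_mem_coe_finset]
  set F := hSfin.toFinset with hF
  have hFmem : ∀ 𝔭 ∈ F, 𝔭.IsPrime ∧ 𝔭 ≠ ⊥ ∧ R ∈ 𝔭 := by
    intro 𝔭 h𝔭
    rw [hF, Set.Finite.mem_toFinset] at h𝔭
    exact ⟨h𝔭.1, fun hbot => hR (by simpa [hbot] using h𝔭.2), h𝔭.2⟩
  set g : Ideal (𝓞 L) → ℝ := fun 𝔭 => Real.log (Ideal.absNorm 𝔭 : ℝ) with hg
  have hfacts : ∀ 𝔭 ∈ F, 2 ≤ Ideal.absNorm 𝔭 ∧ ((Ideal.absNorm 𝔭).minFac).Prime ∧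
      (((Ideal.absNorm 𝔭).minFac : ℕ) : 𝓞 L) ∈ 𝔭 := fun 𝔭 h𝔭 =>
    minFac_fact 𝔭 (hFmem 𝔭 h𝔭).1 (hFmem 𝔭 h𝔭).2.1
  have hgnonneg : ∀ 𝔭 ∈ F, 0 ≤ g 𝔭 := by
    intro 𝔭 h𝔭
    exact Real.log_nonneg (by exact_mod_cast (hfacts 𝔭 h𝔭).1.trans' (by norm_num))
  -- total log-norm bound
  have hNdvd : (∏ 𝔭 ∈ F, Ideal.absNorm 𝔭) ∣ n := by
    have h1 := prod_primes_dvd (Ideal.span {R}) F (fun 𝔭 h => ⟨(hFmem 𝔭 h).1, (hFmem 𝔭 h).2.1,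
      (Ideal.span_singleton_le_iff_mem 𝔭).mpr (hFmem 𝔭 h).2.2⟩)
    have h2 := map_dvd Ideal.absNorm h1
    rwa [map_prod, hnorm_span] at h2
  have hsumlog : ∑ 𝔭 ∈ F, g 𝔭 ≤ u := by
    have hlogprod : Real.log ((∏ 𝔭 ∈ F, Ideal.absNorm 𝔭 : ℕ) : ℝ) = ∑ 𝔭 ∈ F, g 𝔭 := by
      rw [Nat.cast_prod, Real.log_prod]
      intro 𝔭 h𝔭
      have h2 := (hfacts 𝔭 h𝔭).1
      have h3 : Ideal.absNorm 𝔭 ≠ 0 := by omega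
      exact_mod_cast h3
    rw [← hlogprod, hu]
    apply Real.log_le_log
    · have hpos : 0 < ∏ 𝔭 ∈ F, Ideal.absNorm 𝔭 := by
        apply Finset.prod_pos
        intro 𝔭 h𝔭
        have h2 := (hfacts 𝔭 h𝔭).1
        omega
      exact_mod_cast hpos
    · exact_mod_cast Nat.le_of_dvd (by omega) hNdvd
  set M : ℕ := max 3 ⌊u⌋₊ with hM
  have hM3 : 3 ≤ M := le_max_left _ _
  have hMpos : (0:ℝ) < (M:ℝ) := by
    have : (3:ℝ) ≤ (M:ℝ) := by exact_mod_cast hM3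
    linarith
  set f : Ideal (𝓞 L) → ℝ :=
    fun 𝔭 => Real.log (Ideal.absNorm 𝔭 : ℝ) / (((Ideal.absNorm 𝔭).minFac : ℝ) - 1) with hf
  have hsplit := Finset.sum_filter_add_sum_filter_not F
    (fun 𝔭 => (Ideal.absNorm 𝔭).minFac ≤ M) f
  set F1 := F.filter (fun 𝔭 => (Ideal.absNorm 𝔭).minFac ≤ M) with hF1
  set F2 := F.filter (fun 𝔭 => ¬ (Ideal.absNorm 𝔭).minFac ≤ M) with hF2
  -- large primes part
  have hlarge : ∑ 𝔭 ∈ F2, f 𝔭 ≤ u / (M:ℝ) := by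
    calc ∑ 𝔭 ∈ F2, f 𝔭 ≤ ∑ 𝔭 ∈ F2, g 𝔭 / (M:ℝ) := by
          apply Finset.sum_le_sum
          intro 𝔭 h𝔭
          have h𝔭F : 𝔭 ∈ F := Finset.mem_of_mem_filter 𝔭 h𝔭
          have hcond : ¬ (Ideal.absNorm 𝔭).minFac ≤ M := (Finset.mem_filter.mp h𝔭).2
          have hge : (M:ℝ) + 1 ≤ ((Ideal.absNorm 𝔭).minFac : ℝ) := by
            exact_mod_cast Nat.succ_le_of_lt (Nat.lt_of_not_le hcond)
          exact div_le_div_of_nonneg_left (hgnonneg 𝔭 h𝔭F) hMpos (by linarith)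
      _ = (∑ 𝔭 ∈ F2, g 𝔭) / (M:ℝ) := by rw [Finset.sum_div]
      _ ≤ (∑ 𝔭 ∈ F, g 𝔭) / (M:ℝ) := by
          apply (div_le_div_iff_of_pos_right hMpos).mpr
          exact Finset.sum_le_sum_of_subset_of_nonneg (Finset.filter_subset _ _)
            (fun 𝔭 h _ => hgnonneg 𝔭 h)
      _ ≤ u / (M:ℝ) := (div_le_div_iff_of_pos_right hMpos).mpr hsumlog
  -- small primes part
  have hsmall : ∑ 𝔭 ∈ F1, f 𝔭 ≤ (Module.finrank ℚ L : ℝ) * SSum M := by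
    set Q := F1.image (fun 𝔭 => (Ideal.absNorm 𝔭).minFac) with hQ
    have hmap : ∀ 𝔭 ∈ F1, (Ideal.absNorm 𝔭).minFac ∈ Q :=
      fun 𝔭 h𝔭 => Finset.mem_image_of_mem _ h𝔭
    rw [← Finset.sum_fiberwise_of_maps_to hmap f]
    have fiber_bound : ∀ q ∈ Q,
        (∑ 𝔭 ∈ F1.filter (fun 𝔭 => (Ideal.absNorm 𝔭).minFac = q), f 𝔭)
          ≤ (Module.finrank ℚ L : ℝ) * (Real.log q / ((q:ℝ) - 1)) := by
      intro q hqQ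
      obtain ⟨𝔭₀, h𝔭₀, hq0⟩ := Finset.mem_image.mp hqQ
      have h𝔭₀F : 𝔭₀ ∈ F := Finset.mem_of_mem_filter 𝔭₀ h𝔭₀
      have hqprime : q.Prime := hq0 ▸ (hfacts 𝔭₀ h𝔭₀F).2.1
      have hq2 : (2:ℝ) ≤ (q:ℝ) := by exact_mod_cast hqprime.two_le
      set G := F1.filter (fun 𝔭 => (Ideal.absNorm 𝔭).minFac = q) with hG
      have hGmem : ∀ 𝔭 ∈ G, 𝔭 ∈ F ∧ (Ideal.absNorm 𝔭).minFac = q := by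
        intro 𝔭 h𝔭
        have h1 := Finset.mem_filter.mp h𝔭
        exact ⟨Finset.mem_of_mem_filter 𝔭 h1.1, h1.2⟩
      have hproddvd : (∏ 𝔭 ∈ G, Ideal.absNorm 𝔭) ∣ q ^ Module.finrank ℚ L := by
        have h1 := prod_primes_dvd (Ideal.span {(q : 𝓞 L)}) G (fun 𝔭 h => by
          obtain ⟨h𝔭F, hmfq⟩ := hGmem 𝔭 h
          refine ⟨(hFmem 𝔭 h𝔭F).1, (hFmem 𝔭 h𝔭F).2.1, ?_⟩
          apply (Ideal.span_singleton_le_iff_mem 𝔭).mpr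
          have := (hfacts 𝔭 h𝔭F).2.2
          rwa [hmfq] at this)
        have h2 := map_dvd Ideal.absNorm h1
        rwa [map_prod, absNorm_span_natCast] at h2
      have hsumG : ∑ 𝔭 ∈ G, g 𝔭 ≤ (Module.finrank ℚ L : ℝ) * Real.log q := by
        have hlogprod : Real.log ((∏ 𝔭 ∈ G, Ideal.absNorm 𝔭 : ℕ) : ℝ) = ∑ 𝔭 ∈ G, g 𝔭 := by
          rw [Nat.cast_prod, Real.log_prod]
          intro 𝔭 h𝔭
          have h2 := (hfacts 𝔭 (hGmem 𝔭 h𝔭).1).1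
          have h3 : Ideal.absNorm 𝔭 ≠ 0 := by omega
          exact_mod_cast h3
        have hle : (∏ 𝔭 ∈ G, Ideal.absNorm 𝔭) ≤ q ^ Module.finrank ℚ L :=
          Nat.le_of_dvd (pow_pos hqprime.pos _) hproddvd
        calc ∑ 𝔭 ∈ G, g 𝔭 = Real.log ((∏ 𝔭 ∈ G, Ideal.absNorm 𝔭 : ℕ) : ℝ) := hlogprod.symm
          _ ≤ Real.log ((q:ℝ) ^ Module.finrank ℚ L) := by
              apply Real.log_le_log
              · have hpos : 0 < ∏ 𝔭 ∈ G, Ideal.absNorm 𝔭 := by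
                  apply Finset.prod_pos
                  intro 𝔭 h𝔭
                  have := (hfacts 𝔭 (hGmem 𝔭 h𝔭).1).1
                  omega
                exact_mod_cast hpos
              · exact_mod_cast hle
          _ = (Module.finrank ℚ L : ℝ) * Real.log q := by rw [Real.log_pow]
      have hfG : ∀ 𝔭 ∈ G, f 𝔭 = g 𝔭 / ((q:ℝ) - 1) := by
        intro 𝔭 h𝔭
        simp only [hf, hg]
        rw [(hGmem 𝔭 h𝔭).2]
      calc (∑ 𝔭 ∈ G, f 𝔭) = ∑ 𝔭 ∈ G, g 𝔭 / ((q:ℝ) - 1) := Finset.sum_congr rfl hfG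
        _ = (∑ 𝔭 ∈ G, g 𝔭) / ((q:ℝ) - 1) := by rw [Finset.sum_div]
        _ ≤ ((Module.finrank ℚ L : ℝ) * Real.log q) / ((q:ℝ) - 1) := by
            exact (div_le_div_iff_of_pos_right (by linarith : (0:ℝ) < (q:ℝ) - 1)).mpr hsumG
        _ = (Module.finrank ℚ L : ℝ) * (Real.log q / ((q:ℝ) - 1)) := by ring
    calc (∑ q ∈ Q, ∑ 𝔭 ∈ F1.filter (fun 𝔭 => (Ideal.absNorm 𝔭).minFac = q), f 𝔭)
        ≤ ∑ q ∈ Q, (Module.finrank ℚ L : ℝ) * (Real.log q / ((q:ℝ) - 1)) :=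
          Finset.sum_le_sum fiber_bound
      _ = (Module.finrank ℚ L : ℝ) * ∑ q ∈ Q, Real.log q / ((q:ℝ) - 1) := by
          rw [Finset.mul_sum]
      _ ≤ (Module.finrank ℚ L : ℝ) * SSum M := by
          apply mul_le_mul_of_nonneg_left _ (by positivity)
          rw [SSum]
          apply Finset.sum_le_sum_of_subset_of_nonneg
          · intro q hqQ
            obtain ⟨𝔭₀, h𝔭₀, hq0⟩ := Finset.mem_image.mp hqQ
            have h𝔭₀F : 𝔭₀ ∈ F := Finset.mem_of_mem_filter 𝔭₀ h𝔭₀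
            have hqprime : q.Prime := hq0 ▸ (hfacts 𝔭₀ h𝔭₀F).2.1
            have hqM : q ≤ M := hq0 ▸ (Finset.mem_filter.mp h𝔭₀).2
            exact Finset.mem_filter.mpr ⟨Finset.mem_range.mpr (by omega), hqprime⟩
          · intro q hq _
            have hq2 : (2:ℝ) ≤ (q:ℝ) := by
              exact_mod_cast (Finset.mem_filter.mp hq).2.two_le
            apply div_nonneg (Real.log_nonneg (by linarith)) (by linarith)
  -- assemble
  have hinner := inner_bound u hulog2
  have hfinal : ∑ 𝔭 ∈ F, f 𝔭 ≤ (Module.finrank ℚ L : ℝ) * (2 * Real.log u + 3.5) := by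
    have hdivnn : 0 ≤ u / (M:ℝ) := div_nonneg hupos.le hMpos.le
    calc ∑ 𝔭 ∈ F, f 𝔭 = ∑ 𝔭 ∈ F1, f 𝔭 + ∑ 𝔭 ∈ F2, f 𝔭 := hsplit.symm
      _ ≤ (Module.finrank ℚ L : ℝ) * SSum M + u / (M:ℝ) := add_le_add hsmall hlarge
      _ ≤ (Module.finrank ℚ L : ℝ) * SSum M + (Module.finrank ℚ L : ℝ) * (u / (M:ℝ)) := by
          nlinarith [hdivnn, hd1]
      _ = (Module.finrank ℚ L : ℝ) * (SSum M + u / (M:ℝ)) := by ring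
      _ ≤ (Module.finrank ℚ L : ℝ) * (2 * Real.log u + 3.5) := by
          apply mul_le_mul_of_nonneg_left _ (by positivity)
          rw [hM]
          exact inner_bound u hulog2
  exact hfinal
end
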